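/- If a connected graph is partitioned into K connected subgraphs each of diameter at most D_S, and the quotient graph on subgraphs (with an edge between two subgraphs whenever some cut edge joins them) is connected with diameter at most D_Q, then the GPNN schedule with T_S = D_S and T_C = 1 solves broadcast within at most D_Q + 1 outer loop iterations. -/

import Mathlib

/-- One synchronous information-propagation step over the edge relation `F`:
node `v`'s information set becomes its old set united with the information
sets of all its `F`-neighbors. -/
def infoStep {V : Type*} (F : V → V → Prop) (I : V → Set V) : V → Set V :=
  fun v => I v ∪ ⋃ u ∈ {u | F u v}, I u

/-- The quotient graph of a partition `L : V → Fin K`: subgraphs `i ≠ j` are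
adjacent iff some (cut) edge of `G` joins block `i` to block `j`. -/
def quotientGraph {V : Type*} (G : SimpleGraph V) (K : ℕ) (L : V → Fin K) :
    SimpleGraph (Fin K) where
  Adj i j := i ≠ j ∧ ∃ u v, G.Adj u v ∧ L u = i ∧ L v = j
  symm := by
    constructor
    rintro i j ⟨hij, u, v, huv, hu, hv⟩
    exact ⟨hij.symm, v, u, huv.symm, hv, hu⟩
  loopless := by
    constructor
    rintro i ⟨hij, -⟩
    exact hij rfl

section aux
variable {V : Type*} (F : V → V → Prop)

lemma infoStep_self {I : V → Set V} {v : V} : I v ⊆ infoStep F I v :=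
  Set.subset_union_left

lemma infoStep_of_rel {I : V → Set V} {u v : V} (h : F u v) : I u ⊆ infoStep F I v :=
  fun x hx => Or.inr (Set.mem_biUnion h hx)

lemma infoStep_iter_self {I : V → Set V} {v : V} : ∀ n, I v ⊆ (infoStep F)^[n] I v := by
  intro n
  induction n with
  | zero => simp
  | succ n ih =>
    rw [Function.iterate_succ_apply']
    exact ih.trans (infoStep_self F)

lemma infoStep_mono {I J : V → Set V} (h : ∀ x, I x ⊆ J x) (v : V) :
    infoStep F I v ⊆ infoStep F J v := by
  apply Set.union_subset_union (h v)
  exact Set.iUnion₂_mono fun u _ => h u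

lemma infoStep_iter_mono {I J : V → Set V} (h : ∀ x, I x ⊆ J x) (n : ℕ) :
    ∀ v, (infoStep F)^[n] I v ⊆ (infoStep F)^[n] J v := by
  induction n with
  | zero => exact h
  | succ n ih =>
    intro v
    rw [Function.iterate_succ_apply', Function.iterate_succ_apply']
    exact infoStep_mono F ih v

end aux

lemma walk_prop {V : Type*} {G : SimpleGraph V} {K : ℕ} {L : V → Fin K}
    {x y : V} (w : G.Walk x y) (hw : ∀ z ∈ w.support, L z = L x) :
    ∀ n, w.length ≤ n → ∀ I : V → Set V,
      I x ⊆ (infoStep (fun u v => G.Adj u v ∧ L u = L v))^[n] I y := by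
  induction w with
  | nil => intro n _ I; exact infoStep_iter_self _ n
  | @cons x b y h p ih =>
    intro n hn I
    have hb : L b = L x := hw b (by simp)
    obtain ⟨m, rfl⟩ : ∃ m, n = m + 1 := by
      cases n with
      | zero => simp [SimpleGraph.Walk.length_cons] at hn
      | succ m => exact ⟨m, rfl⟩
    have hn' : p.length ≤ m := by
      simpa [SimpleGraph.Walk.length_cons] using hn
    have hsup : ∀ z ∈ p.support, L z = L b := by
      intro z hz
      rw [hb]
      exact hw z (by simp [hz])
    rw [Function.iterate_succ_apply]
    exact (infoStep_of_rel _ ⟨h, hb.symm⟩).trans (ih hsup m hn' _)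


/-- If a connected graph is partitioned into `K` blocks, each inducing a
connected subgraph of diameter at most `D_S` (between any two nodes of a block
there is a walk of length ≤ `D_S` staying inside the block), and the quotient
graph is connected with diameter at most `D_Q`, then the GPNN schedule with
`T_S = D_S` intra-subgraph steps and `T_C = 1` inter-subgraph step per outer
loop solves broadcast within `D_Q + 1` outer iterations: every node's
information set becomes all of `V`. -/
theorem gpnn_broadcast_bound {V : Type*} [Fintype V] (G : SimpleGraph V)
    (hG : G.Connected) (K : ℕ) (L : V → Fin K) (D_S D_Q : ℕ)
    (hblock : ∀ u v : V, L u = L v →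
      ∃ w : G.Walk u v, w.length ≤ D_S ∧ ∀ x ∈ w.support, L x = L u)
    (hquot : ∀ i j : Fin K,
      ∃ p : (quotientGraph G K L).Walk i j, p.length ≤ D_Q) :
    let intra : (V → Set V) → V → Set V :=
      infoStep (fun u v => G.Adj u v ∧ L u = L v)
    let inter : (V → Set V) → V → Set V :=
      infoStep (fun u v => G.Adj u v ∧ L u ≠ L v)
    let outer : (V → Set V) → V → Set V := fun I => inter (intra^[D_S] I)
    ∀ v : V, outer^[D_Q + 1] (fun v => {v}) v = Set.univ := by
  intro intra inter outer
  set Q := quotientGraph G K L with hQ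
  set I₀ : V → Set V := fun v => {v} with hI₀
  have outer_def : ∀ I, outer I = inter (intra^[D_S] I) := fun _ => rfl
  have self_mono : ∀ (I : V → Set V) (x : V), I x ⊆ outer I x := by
    intro I x
    exact (infoStep_iter_self _ D_S).trans (infoStep_self _)
  have key : ∀ t : ℕ, ∀ (i j : Fin K) (p : Q.Walk i j), p.length ≤ t →
      ∀ u v : V, L u = j → L v = i → u ∈ intra^[D_S] (outer^[t] I₀) v := by
    intro t
    induction t with
    | zero =>
      intro i j p hp u v hu hv
      cases p with
      | nil =>
        obtain ⟨w, hwlen, hwsup⟩ := hblock u v (by rw [hu, hv])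
        exact walk_prop w hwsup D_S hwlen I₀ rfl
      | cons h q => simp [SimpleGraph.Walk.length_cons] at hp
    | succ t ih =>
      intro i j p hp u v hu hv
      cases p with
      | nil =>
        have := ih i i SimpleGraph.Walk.nil (Nat.zero_le t) u v hu hv
        refine infoStep_iter_mono _ (fun x => ?_) D_S v this
        rw [Function.iterate_succ_apply']
        exact self_mono _ x
      | @cons _ k _ h q =>
        obtain ⟨hik, a, b, hab, ha, hbk⟩ := h
        have hq : q.length ≤ t := by
          have h2 := (SimpleGraph.Walk.length_cons _ q).symm.trans_le hp
          omega
        have hub : u ∈ intra^[D_S] (outer^[t] I₀) b := ih k j q hq u b hu hbk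
        have hua : u ∈ outer^[t+1] I₀ a := by
          rw [Function.iterate_succ_apply', outer_def]
          refine infoStep_of_rel _ ⟨hab.symm, ?_⟩ hub
          rw [ha, hbk]
          exact fun hh => hik hh.symm
        obtain ⟨w, hwlen, hwsup⟩ := hblock a v (by rw [ha, hv])
        exact walk_prop w hwsup D_S hwlen _ hua
  intro v
  rw [Set.eq_univ_iff_forall]
  intro u
  obtain ⟨p, hp⟩ := hquot (L v) (L u)
  have := key D_Q (L v) (L u) p hp u v rfl rfl
  rw [Function.iterate_succ_apply', outer_def]
  exact infoStep_self _ this
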